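/- The real polynomials |x|², t², x₃·t, and x₃² generate, as an ℝ-algebra, the algebra of all real polynomial functions on ℝ³×ℝ that are invariant under the O(2)-action A·(x₁,x₂,x₃,t) = (A(x₁,x₂), (det A)x₃, (det A)t). (This gives the Hilbert basis ρ'(x,t) = (|x|², t², x₃t, x₃²) for (𝒩',K').) -/

import Mathlib

open MeasureTheory Complex Matrix

noncomputable section

/-- The orthogonal group `O(2)` as a set of 2×2 matrices. -/
def O2 : Set (Matrix (Fin 2) (Fin 2) ℝ) := {A | A * A.transpose = 1}

/-- The action of `A ∈ O(2)` on `ℝ³ × ℝ`: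
`A·(x₁,x₂,x₃,t) = (A(x₁,x₂), (det A)x₃, (det A)t)`. -/
def KAct (A : Matrix (Fin 2) (Fin 2) ℝ) (p : (Fin 3 → ℝ) × ℝ) : (Fin 3 → ℝ) × ℝ :=
  (![A.mulVec ![p.1 0, p.1 1] 0, A.mulVec ![p.1 0, p.1 1] 1, A.det * p.1 2], A.det * p.2)

/-- `K'`-invariance of a function on `ℝ³ × ℝ`. -/
def InvK' (G : (Fin 3 → ℝ) × ℝ → ℂ) : Prop := ∀ A ∈ O2, ∀ p, G (KAct A p) = G p


/-- `P` is a (real) polynomial function on `ℝ³ × ℝ`. -/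
def IsPolyFun4 (P : (Fin 3 → ℝ) × ℝ → ℝ) : Prop :=
  ∃ Q : MvPolynomial (Fin 4) ℝ, ∀ p : (Fin 3 → ℝ) × ℝ,
    P p = MvPolynomial.eval ![p.1 0, p.1 1, p.1 2, p.2] Q

namespace Statement13Aux

open MvPolynomial

lemma eval_aeval' {σ τ : Type*} (f : σ → MvPolynomial τ ℝ) (F : MvPolynomial σ ℝ) (pt : τ → ℝ) :
    eval pt (aeval f F) = eval (fun i => eval pt (f i)) F := by
  induction F using MvPolynomial.induction_on with
  | C r => simp
  | add p q hp hq => simp only [_root_.map_add, hp, hq]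
  | mul_X p i h => simp only [_root_.map_mul, aeval_X, eval_X, h]

lemma aeval_apply {α : Type*} {n : ℕ} (f : Fin n → (α → ℝ)) (H : MvPolynomial (Fin n) ℝ)
    (p : α) : (MvPolynomial.aeval f H) p = MvPolynomial.eval (fun i => f i p) H := by
  induction H using MvPolynomial.induction_on with
  | C r => simp [Pi.algebraMap_apply]
  | add a b ha hb => simp only [_root_.map_add, Pi.add_apply, ha, hb]
  | mul_X a i h => simp only [_root_.map_mul, aeval_X, eval_X, Pi.mul_apply, h]

lemma aeval_mem {A : Type*} [CommSemiring A] [Algebra ℝ A] {S : Subalgebra ℝ A} {n : ℕ}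
    (f : Fin n → A) (hf : ∀ i, f i ∈ S) (H : MvPolynomial (Fin n) ℝ) :
    MvPolynomial.aeval f H ∈ S := by
  induction H using MvPolynomial.induction_on with
  | C r => simpa using S.algebraMap_mem r
  | add a b ha hb => rw [_root_.map_add]; exact add_mem ha hb
  | mul_X a i h => rw [_root_.map_mul, aeval_X]; exact mul_mem h (hf i)

lemma vecthree_eq (v : Fin 3 → ℝ) : v = ![v 0, v 1, v 2] := by
  funext i; fin_cases i <;> rfl

lemma coeff_eq_zero_of_sign (G : MvPolynomial (Fin 3) ℝ) (ε : Fin 3 → ℝ)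
    (h : ∀ pt : Fin 3 → ℝ, eval pt G = eval (fun i => ε i * pt i) G)
    (m : Fin 3 →₀ ℕ) (hm : (∏ i, ε i ^ m i) = -1) : coeff m G = 0 := by
  set Gε : MvPolynomial (Fin 3) ℝ :=
    ∑ m' ∈ G.support, monomial m' ((∏ i, ε i ^ m' i) * coeff m' G) with hGε
  have key : ∀ pt : Fin 3 → ℝ, eval pt Gε = eval (fun i => ε i * pt i) G := by
    intro pt
    rw [hGε, map_sum, eval_eq']
    refine Finset.sum_congr rfl fun m' _ => ?_
    rw [eval_monomial, Finsupp.prod_fintype _ _ (fun i => pow_zero _)]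
    rw [Finset.prod_congr rfl (fun i _ => mul_pow (ε i) (pt i) (m' i)),
      Finset.prod_mul_distrib]
    ring
  have hGG : Gε = G := MvPolynomial.funext fun pt => (key pt).trans (h pt).symm
  have hcoeff : coeff m Gε = (∏ i, ε i ^ m i) * coeff m G := by
    rw [hGε, coeff_sum]
    simp only [coeff_monomial]
    rw [Finset.sum_ite_eq' G.support m (fun m' => (∏ i, ε i ^ m' i) * coeff m' G)]
    by_cases hmem : m ∈ G.support
    · simp [hmem]
    · simp [hmem, MvPolynomial.notMem_support_iff.mp hmem]
  rw [hGG, hm] at hcoeff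
  linarith

lemma extraction (G : MvPolynomial (Fin 3) ℝ)
    (hc1 : ∀ m : Fin 3 →₀ ℕ, Odd (m 0) → coeff m G = 0)
    (hc2 : ∀ m : Fin 3 →₀ ℕ, Odd (m 1 + m 2) → coeff m G = 0) :
    ∃ H : MvPolynomial (Fin 4) ℝ, ∀ y u v : ℝ,
      eval ![y, u, v] G = eval ![y ^ 2, u ^ 2, u * v, v ^ 2] H := by
  refine ⟨∑ m ∈ G.support, monomial
      (Finsupp.equivFunOnFinite.symm ![m 0 / 2, m 1 / 2, m 1 % 2, m 2 / 2]) (coeff m G),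
    fun y u v => ?_⟩
  rw [map_sum, eval_eq']
  refine Finset.sum_congr rfl fun m _ => ?_
  rw [eval_monomial, Finsupp.prod_fintype _ _ (fun i => pow_zero _)]
  simp only [Finsupp.coe_equivFunOnFinite_symm, Fin.prod_univ_three, Fin.prod_univ_four,
    Matrix.cons_val_zero, Matrix.cons_val_one, Matrix.head_cons, Matrix.cons_val_two,
    Matrix.tail_cons, Matrix.cons_val_three]
  rcases Nat.even_or_odd (m 0) with h0 | h0
  on_goal 2 => rw [hc1 m h0]; ring
  rcases Nat.even_or_odd (m 1) with h1 | h1 <;> rcases Nat.even_or_odd (m 2) with h2 | h2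
  · have e0 : m 0 % 2 = 0 := Nat.even_iff.mp h0
    have e1 : m 1 % 2 = 0 := Nat.even_iff.mp h1
    have e2 : m 2 % 2 = 0 := Nat.even_iff.mp h2
    obtain ⟨k0, hk0, hk0'⟩ : ∃ k, m 0 / 2 = k ∧ m 0 = 2 * k := ⟨m 0 / 2, rfl, by omega⟩
    obtain ⟨k1, hk1, hk1'⟩ : ∃ k, m 1 / 2 = k ∧ m 1 = 2 * k := ⟨m 1 / 2, rfl, by omega⟩
    obtain ⟨k2, hk2, hk2'⟩ : ∃ k, m 2 / 2 = k ∧ m 2 = 2 * k := ⟨m 2 / 2, rfl, by omega⟩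
    rw [hk0, hk1, hk2, e1, hk0', hk1', hk2']
    ring
  · rw [hc2 m (h1.add_odd h2)]; ring
  · rw [hc2 m (h1.add_even h2)]; ring
  · have e0 : m 0 % 2 = 0 := Nat.even_iff.mp h0
    have e1 : m 1 % 2 = 1 := Nat.odd_iff.mp h1
    have e2 : m 2 % 2 = 1 := Nat.odd_iff.mp h2
    obtain ⟨k0, hk0, hk0'⟩ : ∃ k, m 0 / 2 = k ∧ m 0 = 2 * k := ⟨m 0 / 2, rfl, by omega⟩
    obtain ⟨k1, hk1, hk1'⟩ : ∃ k, m 1 / 2 = k ∧ m 1 = 2 * k + 1 := ⟨m 1 / 2, rfl, by omega⟩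
    obtain ⟨k2, hk2, hk2'⟩ : ∃ k, m 2 / 2 = k ∧ m 2 = 2 * k + 1 := ⟨m 2 / 2, rfl, by omega⟩
    rw [hk0, hk1, hk2, e1, hk0', hk1', hk2']
    ring

lemma detsq {A : Matrix (Fin 2) (Fin 2) ℝ} (hA : A ∈ O2) : A.det * A.det = 1 := by
  have := congrArg Matrix.det hA
  rwa [Matrix.det_mul, Matrix.det_transpose, Matrix.det_one] at this

lemma cols {A : Matrix (Fin 2) (Fin 2) ℝ} (hA : A ∈ O2) (i j : Fin 2) :
    A 0 i * A 0 j + A 1 i * A 1 j = if i = j then 1 else 0 := by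
  have h : A.transpose * A = 1 := mul_eq_one_comm.mp hA
  have := congrFun (congrFun h i) j
  simpa [Matrix.mul_apply, Fin.sum_univ_two, Matrix.one_apply] using this

lemma mulVec0 (A : Matrix (Fin 2) (Fin 2) ℝ) (v : Fin 2 → ℝ) :
    A.mulVec v 0 = A 0 0 * v 0 + A 0 1 * v 1 := by
  simp [Matrix.mulVec, dotProduct, Fin.sum_univ_two]

lemma mulVec1 (A : Matrix (Fin 2) (Fin 2) ℝ) (v : Fin 2 → ℝ) :
    A.mulVec v 1 = A 1 0 * v 0 + A 1 1 * v 1 := by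
  simp [Matrix.mulVec, dotProduct, Fin.sum_univ_two]

lemma transposeFin2 (a b c d : ℝ) : (!![a, b; c, d])ᵀ = !![a, c; b, d] := by
  ext i j; fin_cases i <;> fin_cases j <;> rfl

lemma memO2 (a b c d : ℝ) (h1 : a * a + b * b = 1) (h2 : a * c + b * d = 0)
    (h3 : c * c + d * d = 1) : (!![a, b; c, d]) ∈ O2 := by
  show _ * _ = _
  rw [transposeFin2, Matrix.mul_fin_two, Matrix.one_fin_two]
  ext i j
  fin_cases i <;> fin_cases j <;> simp <;> linarith

end Statement13Aux

open Statement13Aux MvPolynomial in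
/-- The polynomials `|x|²`, `t²`, `x₃t`, `x₃²` generate the algebra of `K'`-invariant
polynomial functions on `ℝ³ × ℝ`. -/
theorem statement13 :
    {P : (Fin 3 → ℝ) × ℝ → ℝ | IsPolyFun4 P ∧
        ∀ A ∈ O2, ∀ p : (Fin 3 → ℝ) × ℝ, P (KAct A p) = P p}
      = ↑(Algebra.adjoin ℝ
          ({fun p => p.1 0 ^ 2 + p.1 1 ^ 2 + p.1 2 ^ 2,
            fun p => p.2 ^ 2,
            fun p => p.1 2 * p.2,
            fun p => p.1 2 ^ 2} :
            Set ((Fin 3 → ℝ) × ℝ → ℝ))) := by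
  set g1 : (Fin 3 → ℝ) × ℝ → ℝ := fun p => p.1 0 ^ 2 + p.1 1 ^ 2 + p.1 2 ^ 2 with hg1
  set g2 : (Fin 3 → ℝ) × ℝ → ℝ := fun p => p.2 ^ 2 with hg2
  set g3 : (Fin 3 → ℝ) × ℝ → ℝ := fun p => p.1 2 * p.2 with hg3
  set g4 : (Fin 3 → ℝ) × ℝ → ℝ := fun p => p.1 2 ^ 2 with hg4
  apply Set.eq_of_subset_of_subset
  · -- hard direction
    rintro P ⟨⟨F, hF⟩, hinv⟩
    rw [SetLike.mem_coe]
    -- the three special symmetries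
    have hpi : ∀ p : (Fin 3 → ℝ) × ℝ, P (![-p.1 0, -p.1 1, p.1 2], p.2) = P p := by
      intro p
      have hm : (!![(-1 : ℝ), 0; 0, -1]) ∈ O2 :=
        memO2 _ _ _ _ (by norm_num) (by norm_num) (by norm_num)
      have h := hinv _ hm p
      have hk : KAct !![(-1 : ℝ), 0; 0, -1] p = (![-p.1 0, -p.1 1, p.1 2], p.2) := by
        unfold KAct
        refine Prod.ext ?_ ?_
        · funext i; fin_cases i <;> simp [mulVec0, mulVec1, Matrix.det_fin_two_of]
        · simp [Matrix.det_fin_two_of]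
      rwa [hk] at h
    have href : ∀ p : (Fin 3 → ℝ) × ℝ, P (![p.1 0, -p.1 1, -p.1 2], -p.2) = P p := by
      intro p
      have hm : (!![(1 : ℝ), 0; 0, -1]) ∈ O2 :=
        memO2 _ _ _ _ (by norm_num) (by norm_num) (by norm_num)
      have h := hinv _ hm p
      have hk : KAct !![(1 : ℝ), 0; 0, -1] p = (![p.1 0, -p.1 1, -p.1 2], -p.2) := by
        unfold KAct
        refine Prod.ext ?_ ?_
        · funext i; fin_cases i <;> simp [mulVec0, mulVec1, Matrix.det_fin_two_of]
        · simp [Matrix.det_fin_two_of]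
      rwa [hk] at h
    have hrot : ∀ p : (Fin 3 → ℝ) × ℝ,
        P p = P (![Real.sqrt (p.1 0 ^ 2 + p.1 1 ^ 2), 0, p.1 2], p.2) := by
      intro p
      by_cases hr : Real.sqrt (p.1 0 ^ 2 + p.1 1 ^ 2) = 0
      · have hx : p.1 0 ^ 2 + p.1 1 ^ 2 = 0 := by
          have h1 : (0 : ℝ) ≤ p.1 0 ^ 2 + p.1 1 ^ 2 := by positivity
          nlinarith [Real.sq_sqrt h1, hr]
        have hx1 : p.1 0 = 0 := by nlinarith [sq_nonneg (p.1 0), sq_nonneg (p.1 1)]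
        have hx2 : p.1 1 = 0 := by nlinarith [sq_nonneg (p.1 0), sq_nonneg (p.1 1)]
        have hp : p = (![p.1 0, p.1 1, p.1 2], p.2) := Prod.ext (vecthree_eq p.1) rfl
        rw [hr, hx1, hx2] at *
        conv_lhs => rw [hp]
      · set r := Real.sqrt (p.1 0 ^ 2 + p.1 1 ^ 2) with hrdef
        have hr2 : r ^ 2 = p.1 0 ^ 2 + p.1 1 ^ 2 := Real.sq_sqrt (by positivity)
        have hm : (!![p.1 0 / r, p.1 1 / r; -p.1 1 / r, p.1 0 / r]) ∈ O2 := by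
          refine memO2 _ _ _ _ ?_ ?_ ?_ <;> field_simp <;> nlinarith [hr2]
        have h := hinv _ hm p
        have hk : KAct !![p.1 0 / r, p.1 1 / r; -p.1 1 / r, p.1 0 / r] p
            = (![r, 0, p.1 2], p.2) := by
          have hdet : det !![p.1 0 / r, p.1 1 / r; -p.1 1 / r, p.1 0 / r] = 1 := by
            rw [Matrix.det_fin_two_of]
            field_simp
            nlinarith [hr2]
          unfold KAct
          rw [hdet]
          refine Prod.ext ?_ ?_
          · funext i
            fin_cases i
            · simp [mulVec0]
              field_simp
              nlinarith [hr2]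
            · simp [mulVec1]
              field_simp
              ring
            · simp
          · simp
        rw [hk] at h
        exact h.symm
    -- reduce to three variables
    set G : MvPolynomial (Fin 3) ℝ :=
      aeval ![(X 0 : MvPolynomial (Fin 3) ℝ), 0, X 1, X 2] F with hGdef
    have hG : ∀ pt : Fin 3 → ℝ, eval pt G = P (![pt 0, 0, pt 1], pt 2) := by
      intro pt
      rw [hGdef, eval_aeval']
      have hfn : (fun i => eval pt ((![(X 0 : MvPolynomial (Fin 3) ℝ), 0, X 1, X 2]) i))
          = ![pt 0, 0, pt 1, pt 2] := by
        funext i; fin_cases i <;> simp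
      rw [hfn, hF (![pt 0, 0, pt 1], pt 2)]
      norm_num
      rfl
    have hc1 : ∀ m : Fin 3 →₀ ℕ, Odd (m 0) → coeff m G = 0 := by
      intro m hm
      refine coeff_eq_zero_of_sign G ![-1, 1, 1] (fun pt => ?_) m ?_
      · rw [hG]
        have h2 : (fun i => (![(-1 : ℝ), 1, 1]) i * pt i) = ![-pt 0, pt 1, pt 2] := by
          funext i; fin_cases i <;> simp
        rw [h2, hG]
        have := hpi (![pt 0, 0, pt 1], pt 2)
        simp only [Matrix.cons_val_zero, Matrix.cons_val_one, Matrix.head_cons,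
          Matrix.cons_val_two, Matrix.tail_cons, neg_zero] at this ⊢
        exact this.symm
      · rw [Fin.prod_univ_three]
        simp [hm.neg_one_pow]
    have hc2 : ∀ m : Fin 3 →₀ ℕ, Odd (m 1 + m 2) → coeff m G = 0 := by
      intro m hm
      refine coeff_eq_zero_of_sign G ![1, -1, -1] (fun pt => ?_) m ?_
      · rw [hG]
        have h2 : (fun i => (![(1 : ℝ), -1, -1]) i * pt i) = ![pt 0, -pt 1, -pt 2] := by
          funext i; fin_cases i <;> simp
        rw [h2, hG]
        have := href (![pt 0, 0, pt 1], pt 2)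
        simp only [Matrix.cons_val_zero, Matrix.cons_val_one, Matrix.head_cons,
          Matrix.cons_val_two, Matrix.tail_cons, neg_zero] at this ⊢
        exact this.symm
      · rw [Fin.prod_univ_three]
        simp only [Matrix.cons_val_zero, Matrix.cons_val_one, Matrix.head_cons,
          Matrix.cons_val_two, Matrix.tail_cons]
        rw [one_pow, one_mul, ← pow_add, hm.neg_one_pow]
    obtain ⟨H, hH⟩ := extraction G hc1 hc2
    have hfinal : ∀ p : (Fin 3 → ℝ) × ℝ,
        P p = eval ![p.1 0 ^ 2 + p.1 1 ^ 2, p.1 2 ^ 2, p.1 2 * p.2, p.2 ^ 2] H := by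
      intro p
      rw [hrot p]
      have h1 := hG ![Real.sqrt (p.1 0 ^ 2 + p.1 1 ^ 2), p.1 2, p.2]
      simp only [Matrix.cons_val_zero, Matrix.cons_val_one, Matrix.head_cons,
        Matrix.cons_val_two, Matrix.tail_cons] at h1
      have h2 := hH (Real.sqrt (p.1 0 ^ 2 + p.1 1 ^ 2)) (p.1 2) p.2
      rw [Real.sq_sqrt (by positivity : (0 : ℝ) ≤ p.1 0 ^ 2 + p.1 1 ^ 2)] at h2
      rw [← h1, h2]
    have hP : P = MvPolynomial.aeval ![g1 - g4, g4, g3, g2] H := by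
      funext p
      have harg : (fun i => (![g1 - g4, g4, g3, g2] : Fin 4 → (Fin 3 → ℝ) × ℝ → ℝ) i p)
          = ![p.1 0 ^ 2 + p.1 1 ^ 2, p.1 2 ^ 2, p.1 2 * p.2, p.2 ^ 2] := by
        funext i
        fin_cases i <;> simp [hg1, hg2, hg3, hg4, Pi.sub_apply] <;> ring
      rw [hfinal p, aeval_apply, harg]
    rw [hP]
    refine aeval_mem _ (fun i => ?_) H
    fin_cases i
    · exact sub_mem (Algebra.subset_adjoin (by simp)) (Algebra.subset_adjoin (by simp))
    · exact Algebra.subset_adjoin (by simp)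
    · exact Algebra.subset_adjoin (by simp)
    · exact Algebra.subset_adjoin (by simp)
  · -- easy direction
    intro P hP
    rw [SetLike.mem_coe] at hP
    induction hP using Algebra.adjoin_induction with
    | mem x hx =>
      simp only [Set.mem_insert_iff, Set.mem_singleton_iff] at hx
      rcases hx with h | h | h | h
      · subst h
        refine ⟨⟨X 0 ^ 2 + X 1 ^ 2 + X 2 ^ 2, fun p => by simp [hg1]⟩, fun A hA p => ?_⟩
        have h00 := cols hA 0 0
        have h01 := cols hA 0 1
        have h11 := cols hA 1 1
        norm_num at h00 h01 h11
        simp only [hg1, KAct, Matrix.cons_val_zero, Matrix.cons_val_one, Matrix.head_cons,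
          Matrix.cons_val_two, Matrix.tail_cons, mulVec0, mulVec1]
        linear_combination p.1 0 ^ 2 * h00 + p.1 1 ^ 2 * h11 + 2 * p.1 0 * p.1 1 * h01 +
          p.1 2 ^ 2 * detsq hA
      · subst h
        refine ⟨⟨X 3 ^ 2, fun p => by simp [hg2]⟩, fun A hA p => ?_⟩
        simp only [hg2, KAct]
        linear_combination p.2 ^ 2 * detsq hA
      · subst h
        refine ⟨⟨X 2 * X 3, fun p => by simp [hg3]⟩, fun A hA p => ?_⟩
        simp only [hg3, KAct, Matrix.cons_val_two, Matrix.tail_cons, Matrix.head_cons,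
          Matrix.cons_val_one]
        linear_combination p.1 2 * p.2 * detsq hA
      · subst h
        refine ⟨⟨X 2 ^ 2, fun p => by simp [hg4]⟩, fun A hA p => ?_⟩
        simp only [hg4, KAct, Matrix.cons_val_two, Matrix.tail_cons, Matrix.head_cons,
          Matrix.cons_val_one]
        linear_combination p.1 2 ^ 2 * detsq hA
    | algebraMap r =>
      exact ⟨⟨C r, fun p => by simp [Pi.algebraMap_apply]⟩, fun A hA p => by
        simp [Pi.algebraMap_apply]⟩
    | add x y hx hy ihx ihy =>
      obtain ⟨⟨Qx, hQx⟩, hix⟩ := ihx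
      obtain ⟨⟨Qy, hQy⟩, hiy⟩ := ihy
      exact ⟨⟨Qx + Qy, fun p => by simp [← hQx, ← hQy]⟩, fun A hA p => by
        simp only [Pi.add_apply, hix A hA p, hiy A hA p]⟩
    | mul x y hx hy ihx ihy =>
      obtain ⟨⟨Qx, hQx⟩, hix⟩ := ihx
      obtain ⟨⟨Qy, hQy⟩, hiy⟩ := ihy
      exact ⟨⟨Qx * Qy, fun p => by simp [← hQx, ← hQy]⟩, fun A hA p => by
        simp only [Pi.mul_apply, hix A hA p, hiy A hA p]⟩
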